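/- Let G be a finite solvable group, H any finite nontrivial group, and p the smallest prime divisor of gcd(|G|,|H|) such that G has a normal subgroup of index p. If every prime less than p that divides |G| also divides |H|, then Λ_{G,H} ≤ 1/p. -/

import Mathlib

/-- An affine homomorphism from `G` to `H` is a function of the form
`g ↦ h * φ₀ g` for a fixed `h : H` and a group homomorphism `φ₀ : G →* H`. -/
def IsAffineHom {G H : Type*} [Group G] [Group H] (φ : G → H) : Prop :=
  ∃ (h : H) (φ₀ : G →* H), ∀ g : G, φ g = h * φ₀ g

/-- The agreement of two functions `f g : G → H`: the fraction of inputs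
on which they agree, `|Eq(f,g)| / |G|`. -/
noncomputable def agr {G H : Type*} (f g : G → H) : ℝ :=
  (Nat.card {x : G // f x = g x} : ℝ) / (Nat.card G : ℝ)

/-- The maximum agreement `Λ_{G,H}`: the maximum of `agr φ ψ` over all pairs of
distinct affine homomorphisms `φ ψ : G → H`. -/
noncomputable def Lambda (G H : Type*) [Group G] [Group H] : ℝ :=
  sSup {r : ℝ | ∃ φ ψ : G → H,
    IsAffineHom φ ∧ IsAffineHom ψ ∧ φ ≠ ψ ∧ r = agr φ ψ}

/-- A nontrivial finite commutative group has a subgroup of prime index. -/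
lemma exists_prime_index_comm (n : ℕ) :
    ∀ (A : Type*) [CommGroup A] [Finite A], Nontrivial A → Nat.card A = n →
      ∃ B : Subgroup A, B.index.Prime := by
  induction n using Nat.strong_induction_on with
  | _ n ih =>
    intro A _ _ hA hcard
    haveI := hA
    have h1 : 1 < Nat.card A := Finite.one_lt_card
    set q := (Nat.card A).minFac with hq_def
    have hq : q.Prime := Nat.minFac_prime (by omega)
    haveI : Fact q.Prime := ⟨hq⟩
    obtain ⟨x, hx⟩ := exists_prime_orderOf_dvd_card' q (Nat.minFac_dvd _)
    set Z := Subgroup.zpowers x with hZ_def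
    have hcardZ : Nat.card Z = q := by rw [hZ_def, Nat.card_zpowers, hx]
    by_cases hZ : Z = ⊤
    · refine ⟨⊥, ?_⟩
      have : Nat.card A = q := by
        rw [← hcardZ, hZ, Subgroup.card_top]
      rw [Subgroup.index_bot, this]
      exact hq
    · have hidx1 : Z.index ≠ 1 := fun h => hZ (Subgroup.index_eq_one.mp h)
      have hidx0 : Z.index ≠ 0 := Subgroup.index_ne_zero_of_finite
      have hmul : Nat.card Z * Z.index = Nat.card A := Subgroup.card_mul_index Z
      have hlt : Z.index < n := by
        rw [← hcard, ← hmul, hcardZ]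
        have : 2 ≤ q := hq.two_le
        nlinarith [Nat.pos_of_ne_zero hidx0]
      haveI : Nontrivial (A ⧸ Z) := by
        rw [← Finite.one_lt_card_iff_nontrivial, ← Subgroup.index_eq_card]
        omega
      obtain ⟨B', hB'⟩ := ih Z.index hlt (A ⧸ Z) inferInstance
        (Z.index_eq_card ▸ rfl)
      refine ⟨B'.comap (QuotientGroup.mk' Z), ?_⟩
      rwa [Subgroup.index_comap_of_surjective _ (QuotientGroup.mk'_surjective Z)]

lemma commutator_ne_top_of_solvable (Q : Type*) [Group Q] [Nontrivial Q]
    [Group.IsSolvable Q] : commutator Q ≠ ⊤ := by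
  intro h
  obtain ⟨n, hn⟩ := Group.IsSolvable.solvable (G := Q)
  have hall : ∀ m, derivedSeries Q m = ⊤ := by
    intro m
    induction m with
    | zero => exact derivedSeries_zero Q
    | succ m ihm =>
      rw [derivedSeries_succ, ihm]
      exact h
  have := hall n
  rw [hn] at this
  exact absurd this.symm top_ne_bot

/-- In a finite solvable group, any proper subgroup `K` yields a normal subgroup of
prime index `q ≤ [G:K]`. -/
lemma exists_normal_prime_index (G : Type*) [Group G] [Finite G] [Group.IsSolvable G]
    (K : Subgroup G) (hK : K ≠ ⊤) :
    ∃ q : ℕ, q.Prime ∧ q ≤ K.index ∧ ∃ N : Subgroup G, N.Normal ∧ N.index = q := by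
  classical
  set C := K.normalCore with hC_def
  have hCK : C ≤ K := K.normalCore_le
  have hC : C ≠ ⊤ := fun h => hK (top_le_iff.mp (h ▸ hCK))
  haveI : Nontrivial (G ⧸ C) := by
    rw [← Finite.one_lt_card_iff_nontrivial, ← Subgroup.index_eq_card]
    have h1 : C.index ≠ 1 := fun h => hC (Subgroup.index_eq_one.mp h)
    have h0 : C.index ≠ 0 := Subgroup.index_ne_zero_of_finite
    omega
  have hcomm : commutator (G ⧸ C) ≠ ⊤ := commutator_ne_top_of_solvable _
  haveI : Nontrivial (Abelianization (G ⧸ C)) := by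
    rw [← Finite.one_lt_card_iff_nontrivial]
    have h1 : (commutator (G ⧸ C)).index ≠ 1 := fun h => hcomm (Subgroup.index_eq_one.mp h)
    have h0 : (commutator (G ⧸ C)).index ≠ 0 := Subgroup.index_ne_zero_of_finite
    have : Nat.card (Abelianization (G ⧸ C)) = (commutator (G ⧸ C)).index :=
      (Subgroup.index_eq_card _).symm
    omega
  obtain ⟨B, hB⟩ := exists_prime_index_comm (Nat.card (Abelianization (G ⧸ C)))
    (Abelianization (G ⧸ C)) inferInstance rfl
  refine ⟨B.index, hB, ?_, ?_⟩
  · -- B.index ≤ K.index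
    have h1 : B.index ∣ Nat.card (Abelianization (G ⧸ C)) := B.index_dvd_card
    have h2 : Nat.card (Abelianization (G ⧸ C)) ∣ Nat.card (G ⧸ C) := by
      have : Nat.card (Abelianization (G ⧸ C)) = (commutator (G ⧸ C)).index :=
        (Subgroup.index_eq_card _).symm
      rw [this]
      exact (commutator (G ⧸ C)).index_dvd_card
    have h3 : Nat.card (G ⧸ C) ∣ Nat.factorial K.index := by
      have hcq : Nat.card (G ⧸ C) = C.index := (Subgroup.index_eq_card C).symm
      have hker : C = (MulAction.toPermHom G (G ⧸ K)).ker := K.normalCore_eq_ker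
      have : C.index = Nat.card (MulAction.toPermHom G (G ⧸ K)).range := by
        rw [hker, Subgroup.index_ker]
      rw [hcq, this]
      have hperm : Nat.card (Equiv.Perm (G ⧸ K)) = Nat.factorial K.index := by
        have := Fintype.ofFinite (G ⧸ K)
        rw [Nat.card_eq_fintype_card, Fintype.card_perm, ← Nat.card_eq_fintype_card,
          ← Subgroup.index_eq_card]
      rw [← hperm]
      exact Subgroup.card_subgroup_dvd_card _
    exact (Nat.Prime.dvd_factorial hB).mp (h1.trans (h2.trans h3))
  · refine ⟨B.comap ((Abelianization.of).comp (QuotientGroup.mk' C)), ?_, ?_⟩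
    · exact Subgroup.Normal.comap inferInstance _
    · refine Subgroup.index_comap_of_surjective _ ?_
      have h1 : Function.Surjective (Abelianization.of (G := G ⧸ C)) := fun a =>
        Quotient.inductionOn' a fun g => ⟨g, rfl⟩
      exact h1.comp (QuotientGroup.mk'_surjective C)

theorem solvable_dividing_lambda_upper (G H : Type*) [Group G] [Group H]
    [Finite G] [Finite H] [Nontrivial H] [Group.IsSolvable G]
    (p : ℕ) (hp : p.Prime) (hdvd : p ∣ Nat.gcd (Nat.card G) (Nat.card H))
    (hex : ∃ K : Subgroup G, K.Normal ∧ K.index = p)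
    (hmin : ∀ q : ℕ, q.Prime → q ∣ Nat.gcd (Nat.card G) (Nat.card H) →
      (∃ K : Subgroup G, K.Normal ∧ K.index = q) → p ≤ q)
    (hdiv : ∀ q : ℕ, q.Prime → q < p → q ∣ Nat.card G → q ∣ Nat.card H) :
    Lambda G H ≤ 1 / (p : ℝ) := by
  have hp0 : (0 : ℝ) < p := by exact_mod_cast hp.pos
  refine Real.sSup_le ?_ (by positivity)
  rintro r ⟨φ, ψ, ⟨h1, α, hφ⟩, ⟨h2, β, hψ⟩, hne, rfl⟩
  by_cases hE : ∃ x0 : G, φ x0 = ψ x0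
  · obtain ⟨x0, hx0⟩ := hE
    set K : Subgroup G := α.eqLocus β with hK_def
    -- key identity from hx0
    have key : ∀ x : G, φ x = ψ x ↔ α (x0⁻¹ * x) = β (x0⁻¹ * x) := by
      intro x
      have h0 : h1 * α x0 = h2 * β x0 := by rw [← hφ, ← hψ, hx0]
      rw [hφ, hψ, map_mul, map_mul, map_inv, map_inv]
      constructor
      · intro h
        have : (h1 * α x0)⁻¹ * (h1 * α x) = (h2 * β x0)⁻¹ * (h2 * β x) := by
          rw [h0, h]
        simpa [mul_inv_rev, mul_assoc] using this
      · intro h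
        have : (h1 * α x0) * ((α x0)⁻¹ * α x) = (h2 * β x0) * ((β x0)⁻¹ * β x) := by
          rw [h0, h]
        simpa [mul_assoc] using this
    -- the equalizer as a coset of K
    have e : {x : G // φ x = ψ x} ≃ K :=
      { toFun := fun x => ⟨x0⁻¹ * x.1, (key x.1).mp x.2⟩
        invFun := fun y => ⟨x0 * y.1, (key (x0 * y.1)).mpr (by
          have hy : α y.1 = β y.1 := y.2
          simpa [inv_mul_cancel_left] using hy)⟩
        left_inv := fun x => by simp
        right_inv := fun y => by simp }
    have hcardE : Nat.card {x : G // φ x = ψ x} = Nat.card K := Nat.card_congr e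
    -- K is proper
    have hKne : K ≠ ⊤ := by
      intro htop
      apply hne
      funext x
      have hall : ∀ g : G, α g = β g := fun g => by
        have : g ∈ K := htop ▸ Subgroup.mem_top g
        exact this
      have h0 : h1 * α x0 = h2 * β x0 := by rw [← hφ, ← hψ, hx0]
      rw [hall x0] at h0
      have h12 : h1 = h2 := mul_right_cancel h0
      rw [hφ, hψ, hall x, h12]
    -- p ≤ K.index
    obtain ⟨q, hq, hqle, N, hN, hNidx⟩ := exists_normal_prime_index G K hKne
    have hple : p ≤ K.index := by
      by_contra hlt
      push_neg at hlt
      have hqp : q < p := lt_of_le_of_lt hqle hlt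
      have hqG : q ∣ Nat.card G := hNidx ▸ N.index_dvd_card
      have hqH : q ∣ Nat.card H := hdiv q hq hqp hqG
      have := hmin q hq (Nat.dvd_gcd hqG hqH) ⟨N, hN, hNidx⟩
      omega
    -- conclude
    have hKpos : 0 < Nat.card K := Nat.card_pos
    have hmul : Nat.card K * K.index = Nat.card G := Subgroup.card_mul_index K
    rw [agr, hcardE, ← hmul]
    push_cast
    rw [div_mul_cancel_left₀ (by exact_mod_cast hKpos.ne' : (Nat.card K : ℝ) ≠ 0)]
    rw [inv_eq_one_div]
    apply one_div_le_one_div_of_le hp0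
    exact_mod_cast hple
  · push_neg at hE
    haveI : IsEmpty {x : G // φ x = ψ x} := ⟨fun x => hE x.1 x.2⟩
    rw [agr, Nat.card_of_isEmpty]
    simp only [Nat.cast_zero, zero_div]
    positivity
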